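/- Let d ≥ 1 and p ∈ (0,2]. For all x, z ∈ ℝ^d one has |(1+|x+z|²)^{p/2} − (1+|x|²)^{p/2}| ≤ 2^{p/2} |x|^{p/2} |z|^{p/2} + |z|^p. -/

import Mathlib

open MeasureTheory Real

lemma aux_rpow_subadd {q : ℝ} (hq0 : 0 ≤ q) (hq1 : q ≤ 1) {a b : ℝ}
    (ha : 0 ≤ a) (hb : 0 ≤ b) : (a + b) ^ q ≤ a ^ q + b ^ q := by
  lift a to NNReal using ha
  lift b to NNReal using hb
  exact_mod_cast NNReal.rpow_add_le_add_rpow a b hq0 hq1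

lemma aux_abs_rpow_sub {q : ℝ} (hq0 : 0 ≤ q) (hq1 : q ≤ 1) {a b : ℝ}
    (ha : 0 ≤ a) (hb : 0 ≤ b) : |a ^ q - b ^ q| ≤ |a - b| ^ q := by
  have key : ∀ u v : ℝ, 0 ≤ u → 0 ≤ v → v ≤ u → u ^ q - v ^ q ≤ (u - v) ^ q := by
    intro u v hu hv huv
    have h := aux_rpow_subadd hq0 hq1 (sub_nonneg.2 huv) hv
    rw [sub_add_cancel] at h
    linarith
  rcases le_total b a with h | h
  · rw [abs_of_nonneg (sub_nonneg.2 h),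
      abs_of_nonneg (sub_nonneg.2 (Real.rpow_le_rpow hb h hq0))]
    exact key a b ha hb h
  · rw [abs_of_nonpos (sub_nonpos.2 h), abs_of_nonpos (sub_nonpos.2 (Real.rpow_le_rpow ha h hq0)),
      neg_sub, neg_sub]
    exact key b a hb ha h

/-- For `p ∈ (0,2]` and all `x, z ∈ ℝ^d`:
`|(1+|x+z|²)^(p/2) − (1+|x|²)^(p/2)| ≤ 2^(p/2) |x|^(p/2) |z|^(p/2) + |z|^p`. -/
theorem stmt_3 (d : ℕ) (hd : 1 ≤ d) (p : ℝ) (hp : p ∈ Set.Ioc (0 : ℝ) 2)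
    (x z : EuclideanSpace ℝ (Fin d)) :
    |(1 + ‖x + z‖ ^ 2) ^ (p / 2) - (1 + ‖x‖ ^ 2) ^ (p / 2)|
      ≤ 2 ^ (p / 2) * ‖x‖ ^ (p / 2) * ‖z‖ ^ (p / 2) + ‖z‖ ^ p := by
  obtain ⟨hp0, hp2⟩ := hp
  set q := p / 2 with hq
  have hq0 : 0 ≤ q := by positivity
  have hq1 : q ≤ 1 := by rw [hq]; linarith
  have ha : (0:ℝ) ≤ 1 + ‖x + z‖ ^ 2 := by positivity
  have hb : (0:ℝ) ≤ 1 + ‖x‖ ^ 2 := by positivity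
  have step1 := aux_abs_rpow_sub hq0 hq1 ha hb
  have hdiff : |(1 + ‖x + z‖ ^ 2) - (1 + ‖x‖ ^ 2)| ≤ 2 * ‖x‖ * ‖z‖ + ‖z‖ ^ 2 := by
    have hexp : ‖x + z‖ ^ 2 = ‖x‖ ^ 2 + 2 * inner ℝ x z + ‖z‖ ^ 2 :=
      norm_add_sq_real x z
    have hinner : |(inner ℝ x z : ℝ)| ≤ ‖x‖ * ‖z‖ := abs_real_inner_le_norm x z
    have : (1 + ‖x + z‖ ^ 2) - (1 + ‖x‖ ^ 2) = 2 * inner ℝ x z + ‖z‖ ^ 2 := by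
      rw [hexp]; ring
    rw [this]
    calc |2 * (inner ℝ x z : ℝ) + ‖z‖ ^ 2| ≤ |2 * (inner ℝ x z : ℝ)| + |‖z‖ ^ 2| := abs_add_le _ _
      _ = 2 * |(inner ℝ x z : ℝ)| + ‖z‖ ^ 2 := by
          rw [abs_mul, abs_of_nonneg (by positivity : (0:ℝ) ≤ ‖z‖ ^ 2)]; norm_num
      _ ≤ 2 * (‖x‖ * ‖z‖) + ‖z‖ ^ 2 := by linarith
      _ = 2 * ‖x‖ * ‖z‖ + ‖z‖ ^ 2 := by ring
  have step2 : |(1 + ‖x + z‖ ^ 2) - (1 + ‖x‖ ^ 2)| ^ q ≤ (2 * ‖x‖ * ‖z‖ + ‖z‖ ^ 2) ^ q :=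
    Real.rpow_le_rpow (abs_nonneg _) hdiff hq0
  have step3 : (2 * ‖x‖ * ‖z‖ + ‖z‖ ^ 2) ^ q ≤ (2 * ‖x‖ * ‖z‖) ^ q + (‖z‖ ^ 2) ^ q :=
    aux_rpow_subadd hq0 hq1 (by positivity) (by positivity)
  have e1 : (2 * ‖x‖ * ‖z‖) ^ q = 2 ^ q * ‖x‖ ^ q * ‖z‖ ^ q := by
    rw [Real.mul_rpow (by positivity) (norm_nonneg _),
      Real.mul_rpow (by norm_num) (norm_nonneg _)]
  have e2 : (‖z‖ ^ 2) ^ q = ‖z‖ ^ p := by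
    rw [← Real.rpow_natCast_mul (norm_nonneg _) 2 q]
    norm_num
    congr 1
    rw [hq]; ring
  calc |(1 + ‖x + z‖ ^ 2) ^ q - (1 + ‖x‖ ^ 2) ^ q|
      ≤ |(1 + ‖x + z‖ ^ 2) - (1 + ‖x‖ ^ 2)| ^ q := step1
    _ ≤ (2 * ‖x‖ * ‖z‖ + ‖z‖ ^ 2) ^ q := step2
    _ ≤ (2 * ‖x‖ * ‖z‖) ^ q + (‖z‖ ^ 2) ^ q := step3
    _ = 2 ^ q * ‖x‖ ^ q * ‖z‖ ^ q + ‖z‖ ^ p := by rw [e1, e2]
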